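/- arXiv:1309.4046 — 5 statements merged into one kernel-verified Lean document; each statement's English description precedes it below -/
import Mathlib

section
/- Klein's lemma: Let a ≤ b be reals, K ∈ ℕ, and f_k, g_k : [a,b] → ℝ measurable functions (k = 1,…,K) such that ∑_{k=1}^K f_k(x)·g_k(y) ≥ 0 for all x, y ∈ [a,b]. Then for all Hermitian N×N matrices A, B with spectra contained in [a,b], we have ∑_{k=1}^K tr(f_k(A)·g_k(B)) ≥ 0, where f_k(A), g_k(B) are defined by the functional calculus. -/
open Set ComplexOrder

lemma klein_aux0 {N : ℕ} (d e : Fin N → ℂ) (W X : Matrix (Fin N) (Fin N) ℂ) :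
    (Matrix.diagonal d * W * Matrix.diagonal e * X).trace
      = ∑ i, ∑ j, d i * W i j * e j * X j i := by
  have h : ∀ i j, (Matrix.diagonal d * W * Matrix.diagonal e) i j = d i * W i j * e j := by
    intro i j; rw [Matrix.mul_diagonal, Matrix.diagonal_mul]
  simp only [Matrix.trace, Matrix.diag, Matrix.mul_apply, h]

lemma klein_aux1 {N : ℕ} (U V : Matrix (Fin N) (Fin N) ℂ) (d e : Fin N → ℂ) :
    ((U * Matrix.diagonal d * star U) * (V * Matrix.diagonal e * star V)).trace
      = ∑ i, ∑ j, d i * e j * ((star U * V) i j * star ((star U * V) i j)) := by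
  have h1 : (U * Matrix.diagonal d * star U) * (V * Matrix.diagonal e * star V)
      = U * (Matrix.diagonal d * (star U * V) * Matrix.diagonal e * (star V)) := by
    simp only [mul_assoc]
  have h2 : (Matrix.diagonal d * (star U * V) * Matrix.diagonal e * (star V)) * U
      = Matrix.diagonal d * (star U * V) * Matrix.diagonal e * ((star V) * U) := by
    simp only [mul_assoc]
  rw [h1, Matrix.trace_mul_comm, h2, klein_aux0]
  refine Finset.sum_congr rfl fun i _ => Finset.sum_congr rfl fun j _ => ?_
  have h3 : (star V * U) j i = star ((star U * V) i j) := by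
    have : star V * U = star (star U * V) := by simp [star_mul]
    rw [this, Matrix.star_apply]
  rw [h3]; ring

/-- **Klein's lemma.** If `∑ k, f k x * g k y ≥ 0` for all `x, y ∈ [a,b]`, then
`∑ k, tr (f k (A) * g k (B)) ≥ 0` for all Hermitian matrices `A, B` with spectra in `[a,b]`,
where `f k (A)`, `g k (B)` are given by the continuous functional calculus. -/
theorem klein_lemma {N K : ℕ} (a b : ℝ) (hab : a ≤ b)
    (f g : Fin K → ℝ → ℝ)
    (hfmeas : ∀ k, Measurable (f k)) (hgmeas : ∀ k, Measurable (g k))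
    (hpos : ∀ x ∈ Icc a b, ∀ y ∈ Icc a b, 0 ≤ ∑ k : Fin K, f k x * g k y)
    (A B : Matrix (Fin N) (Fin N) ℂ)
    (hA : IsSelfAdjoint A) (hB : IsSelfAdjoint B)
    (hspecA : spectrum ℝ A ⊆ Icc a b) (hspecB : spectrum ℝ B ⊆ Icc a b) :
    0 ≤ ∑ k : Fin K, (cfc (f k) A * cfc (g k) B).trace := by
  have hA' : A.IsHermitian := hA
  have hB' : B.IsHermitian := hB
  simp_rw [hA'.cfc_eq, hB'.cfc_eq, Matrix.IsHermitian.cfc, Unitary.conjStarAlgAut_apply, klein_aux1, Function.comp_apply]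
  set W := star (hA'.eigenvectorUnitary : Matrix (Fin N) (Fin N) ℂ) *
    (hB'.eigenvectorUnitary : Matrix (Fin N) (Fin N) ℂ) with hW
  rw [Finset.sum_comm]
  refine Finset.sum_nonneg fun i _ => ?_
  rw [Finset.sum_comm]
  refine Finset.sum_nonneg fun j _ => ?_
  have hw : W i j * star (W i j) = (Complex.normSq (W i j) : ℂ) := Complex.mul_conj (W i j)
  have hsum : ∑ k : Fin K, (RCLike.ofReal (f k (hA'.eigenvalues i)) *
        RCLike.ofReal (g k (hB'.eigenvalues j)) * (W i j * star (W i j)) : ℂ)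
      = ((∑ k : Fin K, f k (hA'.eigenvalues i) * g k (hB'.eigenvalues j) : ℝ) : ℂ) *
        (Complex.normSq (W i j) : ℂ) := by
    rw [Complex.ofReal_sum, Finset.sum_mul]
    exact Finset.sum_congr rfl fun k _ => by
      (rw [hw, Complex.ofReal_mul, mul_rotate, mul_rotate, mul_rotate]; rfl)
  rw [hsum]
  refine mul_nonneg ?_ ?_
  · rw [Complex.zero_le_real]
    exact hpos _ (hspecA (hA'.eigenvalues_mem_spectrum_real i)) _
      (hspecB (hB'.eigenvalues_mem_spectrum_real j))
  · rw [Complex.zero_le_real]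
    exact Complex.normSq_nonneg _
end

section
/- The function h ↦ (h - log(1+h))/h² is monotone decreasing on (-1, ∞) \ {0} (extended by the value 1/2 at h = 0). -/
open Set

private lemma denom_pos' {h t : ℝ} (hh : -1 < h) (ht : t ∈ Set.Icc (0:ℝ) 1) :
    0 < 1 + t * h := by
  rcases le_or_gt 0 h with h0 | h0
  · nlinarith [ht.1]
  · nlinarith [ht.2]

private lemma integrable' {h : ℝ} (hh : -1 < h) :
    IntervalIntegrable (fun t : ℝ => t / (1 + t * h)) MeasureTheory.volume 0 1 := by
  apply ContinuousOn.intervalIntegrable_of_Icc zero_le_one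
  apply ContinuousOn.div continuousOn_id (by fun_prop)
  intro t ht
  exact (denom_pos' hh ht).ne'

private lemma key' {h : ℝ} (hh : -1 < h) :
    (if h = 0 then 1 / 2 else (h - Real.log (1 + h)) / h ^ 2)
      = ∫ t in (0:ℝ)..1, t / (1 + t * h) := by
  rcases eq_or_ne h 0 with rfl | h0
  · simp [integral_id]
  · rw [if_neg h0]
    have hder : ∀ t ∈ Set.uIcc (0:ℝ) 1,
        HasDerivAt (fun t => t / h - Real.log (1 + t * h) / h ^ 2)
          (t / (1 + t * h)) t := by
      intro t ht
      rw [Set.uIcc_of_le zero_le_one] at ht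
      have hd : 0 < 1 + t * h := denom_pos' hh ht
      have h1 : HasDerivAt (fun t : ℝ => 1 + t * h) h t := by
        simpa using ((hasDerivAt_id t).mul_const h).const_add 1
      have h2 : HasDerivAt (fun t : ℝ => Real.log (1 + t * h)) (h / (1 + t * h)) t :=
        h1.log hd.ne'
      have h3 : HasDerivAt (fun t : ℝ => t / h - Real.log (1 + t * h) / h ^ 2)
          (1 / h - (h / (1 + t * h)) / h ^ 2) t :=
        ((hasDerivAt_id t).div_const h).sub (h2.div_const (h ^ 2))
      convert h3 using 1
      field_simp
      ring
    rw [intervalIntegral.integral_eq_sub_of_hasDerivAt hder (integrable' hh)]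
    have : (1:ℝ) + 1 * h = 1 + h := by ring
    rw [this]
    field_simp
    ring
    simp

/-- The function `h ↦ (h - log (1+h)) / h²`, extended by the value `1/2` at `h = 0`,
is monotone nonincreasing on `(-1, ∞)`. -/
theorem sub_log_div_sq_antitone :
    AntitoneOn (fun h : ℝ => if h = 0 then 1 / 2 else (h - Real.log (1 + h)) / h ^ 2)
      (Ioi (-1)) := by
  intro x hx y hy hxy
  rw [mem_Ioi] at hx hy
  simp only
  rw [key' hx, key' hy]
  apply intervalIntegral.integral_mono_on zero_le_one (integrable' hy) (integrable' hx)
  intro t ht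
  have hdx := denom_pos' hx ht
  have hdy := denom_pos' hy ht
  gcongr <;> nlinarith [ht.1, ht.2]
end

section
/- For t ≥ 0 and x, y ∈ [0,1] with t + y > 0, one has −(log(t+x) − log(t+y) − (x−y)/(t+y)) ≥ (x−y)²/(2(1+t)(t+y)). -/
open Set

/-- For `x ≥ 1`, `log x ≤ (x - 1/x) / 2`. -/
private lemma log_le_half_sub_inv {x : ℝ} (hx : 1 ≤ x) :
    Real.log x ≤ (x - x⁻¹) / 2 := by
  have hx0 : (0 : ℝ) < x := lt_of_lt_of_le one_pos hx
  have h := Real.sinh_log hx0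
  rcases eq_or_lt_of_le hx with h1 | h1
  · simp [← h1]
  · have hlog : 0 < Real.log x := Real.log_pos h1
    have := (Real.self_lt_sinh_iff).2 hlog
    linarith [h ▸ this]

/-- For `0 ≤ s < 1`, `log (1 - s) ≤ -s - s^2/2`. -/
private lemma log_one_sub_le {s : ℝ} (h0 : 0 ≤ s) (h1 : s < 1) :
    Real.log (1 - s) ≤ -s - s ^ 2 / 2 := by
  have habs : |s| < 1 := by rwa [abs_of_nonneg h0]
  have hsum := Real.hasSum_pow_div_log_of_abs_lt_one habs
  have hle : ∑ i ∈ Finset.range 2, s ^ (i + 1) / (i + 1) ≤ -Real.log (1 - s) := by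
    refine sum_le_hasSum _ (fun n _ => by positivity) hsum
  have : s + s ^ 2 / 2 ≤ -Real.log (1 - s) := by
    have e2 : ∑ i ∈ Finset.range 2, s ^ (i + 1) / (i + 1) = s + s ^ 2 / 2 := by
      simp [Finset.sum_range_succ]; norm_num
    linarith [e2 ▸ hle]
  linarith

/-- Pointwise Klein-type lower bound for `φ(x) = -log (t+x)`: for `t ≥ 0` and
`x, y ∈ [0,1]` with `t + x > 0` and `t + y > 0`,
`-(log (t+x) - log (t+y) - (x-y)/(t+y)) ≥ (x-y)² / (2 (1+t) (t+y))`. -/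
theorem klein_log_lower_bound (t x y : ℝ) (ht : 0 ≤ t)
    (hx : x ∈ Icc 0 1) (hy : y ∈ Icc 0 1)
    (htx : 0 < t + x) (hty : 0 < t + y) :
    (x - y) ^ 2 / (2 * (1 + t) * (t + y)) ≤
      -(Real.log (t + x) - Real.log (t + y) - (x - y) / (t + y)) := by
  obtain ⟨hx0, hx1⟩ := hx
  obtain ⟨hy0, hy1⟩ := hy
  have hM : (0:ℝ) < 1 + t := by linarith
  have haM : t + x ≤ 1 + t := by linarith
  have hbM : t + y ≤ 1 + t := by linarith
  have hlog : Real.log (t + x) - Real.log (t + y) = Real.log ((t + x) / (t + y)) := by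
    rw [Real.log_div (ne_of_gt htx) (ne_of_gt hty)]
  rcases le_total y x with hxy | hxy
  · -- x ≥ y : use log X ≤ (X - 1/X)/2 with X = (t+x)/(t+y) ≥ 1
    have hX1 : 1 ≤ (t + x) / (t + y) := (one_le_div hty).2 (by linarith)
    have hB := log_le_half_sub_inv hX1
    rw [inv_div] at hB
    -- log((t+x)/(t+y)) ≤ ((t+x)/(t+y) - (t+y)/(t+x))/2
    rw [hlog]
    have key : (x - y) ^ 2 / (2 * (1 + t) * (t + y)) ≤
        (x - y) / (t + y) - ((t + x) / (t + y) - (t + y) / (t + x)) / 2 := by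
      rw [div_sub_div _ _ (ne_of_gt hty) (ne_of_gt htx)]
      have h1 : (t+x) * (t+x) - (t+y) * (t+y) = (x - y) * ((t+x) + (t+y)) := by ring
      rw [div_le_iff₀ (by positivity)] at *
      have e : ((x - y) / (t + y) - ((t+x) * (t+x) - (t+y) * (t+y)) / ((t + y) * (t + x)) / 2)
          * (2 * (1 + t) * (t + y))
          = (x - y)^2 * ((1+t)/(t+x)) := by
        field_simp
        ring
      rw [e]
      have : (x - y)^2 ≤ (x - y)^2 * ((1+t)/(t+x)) := by
        nth_rewrite 1 [← mul_one ((x - y)^2)]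
        gcongr
        rw [le_div_iff₀ htx]
        linarith
      linarith
    linarith
  · -- x ≤ y : use log(1-s) ≤ -s - s²/2 with s = (y-x)/(t+y)
    set s := (y - x) / (t + y) with hs
    have hs0 : 0 ≤ s := div_nonneg (by linarith) hty.le
    have hs1 : s < 1 := by
      rw [hs, div_lt_one hty]; linarith
    have hIs : (t + x) / (t + y) = 1 - s := by
      rw [hs]; field_simp; ring
    have hA := log_one_sub_le hs0 hs1
    rw [hlog, hIs]
    have hxy' : (x - y) / (t + y) = -s := by rw [hs]; field_simp; ring
    rw [hxy']
    have key : (x - y) ^ 2 / (2 * (1 + t) * (t + y)) ≤ s ^ 2 / 2 := by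
      have e : s ^ 2 / 2 = (x - y)^2 / (2 * (t+y) * (t+y)) := by
        rw [hs]; field_simp; ring
      rw [e]
      gcongr
    linarith
end

section
/- For t > 0 and x, y ∈ (0,1), one has −(log(t+x) − log(t+y) − (x−y)/(t+y)) ≤ (x−y)² · (1 − log(t/(t+y)))/(t+y)². -/
open Set

private lemma klein_haux (w : ℝ) (hw : 0 < w) :
    HasDerivAt (fun w => (1-w)^2*(1-Real.log w) + (1-w) + Real.log w)
      ((1-w)*(2*Real.log w - 1)) w := by
  have h1 : HasDerivAt (fun w : ℝ => 1-w) (-1) w := by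
    simpa using (hasDerivAt_id w).const_sub 1
  have h2 : HasDerivAt (fun w : ℝ => (1-w)^2) (2*(1-w)^1*(-1)) w := h1.pow 2
  have hlog := Real.hasDerivAt_log (ne_of_gt hw)
  have h3 : HasDerivAt (fun w : ℝ => 1 - Real.log w) (-(1/w)) w := by
    simpa using hlog.const_sub 1
  have h4 := (h2.mul h3).add h1 |>.add hlog
  refine h4.congr_deriv ?_
  have : w ≠ 0 := ne_of_gt hw
  field_simp
  ring

private lemma klein_hkey (w : ℝ) (hw0 : 0 < w) (hw1 : w ≤ 1) :
    0 ≤ (1-w)^2*(1-Real.log w) + (1-w) + Real.log w := by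
  set h : ℝ → ℝ := fun w => (1-w)^2*(1-Real.log w) + (1-w) + Real.log w with hh
  have h1 : h 1 = 0 := by simp [hh]
  rcases eq_or_lt_of_le hw1 with heq | hlt
  · rw [heq]; simp [h1]
  · have hanti : StrictAntiOn h (Icc w 1) := by
      apply StrictAntiOn.mono (s := Icc w 1) ?_ (le_refl _)
      apply strictAntiOn_of_deriv_neg (convex_Icc w 1)
      · intro z hz
        exact (klein_haux z (lt_of_lt_of_le hw0 hz.1)).continuousAt.continuousWithinAt
      · intro z hz
        rw [interior_Icc] at hz
        have hz0 : 0 < z := lt_trans hw0 hz.1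
        have hz1 : z < 1 := hz.2
        rw [(klein_haux z hz0).deriv]
        have hlz : Real.log z < 0 := Real.log_neg hz0 hz1
        have : 2*Real.log z - 1 < 0 := by linarith
        exact mul_neg_of_pos_of_neg (by linarith) this
    have := hanti (left_mem_Icc.2 hw1) (right_mem_Icc.2 hw1) hlt
    rw [h1] at this
    exact le_of_lt this

private lemma klein_core (w c : ℝ) (hc0 : 0 < c) (hc1 : c ≤ 1) (hcw : c ≤ w) (hw : 0 < w) :
    (w - 1) - Real.log w ≤ (w - 1)^2 * (1 - Real.log c) := by
  have hlogc : Real.log c ≤ 0 := Real.log_nonpos (le_of_lt hc0) hc1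
  have hlogcw : Real.log c ≤ Real.log w := Real.log_le_log hc0 hcw
  rcases le_or_gt w 1 with hw1 | hw1
  · have hkey := klein_hkey w hw hw1
    have hsq : 0 ≤ (1-w)^2 := sq_nonneg _
    have h2 : (1-w)^2 * (1 - Real.log w) ≤ (1-w)^2 * (1 - Real.log c) := by
      apply mul_le_mul_of_nonneg_left (by linarith) hsq
    have heq : (1-w)^2 = (w-1)^2 := by ring
    nlinarith
  · -- w > 1 : log w ≥ 1 - 1/w
    have hinv : Real.log (1/w) ≤ 1/w - 1 := Real.log_le_sub_one_of_pos (by positivity)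
    rw [Real.log_div one_ne_zero (ne_of_gt hw), Real.log_one] at hinv
    -- so (w-1) - log w ≤ (w-1) - (1 - 1/w) = (w-1)²/w ≤ (w-1)²
    have h1 : (w - 1) - Real.log w ≤ (w-1)^2 / w := by
      have : (w-1) - (1 - 1/w) = (w-1)^2/w := by field_simp
      linarith [this]
    have h2 : (w-1)^2 / w ≤ (w-1)^2 := by
      rw [div_le_iff₀ hw]
      nlinarith [sq_nonneg (w-1)]
    have h3 : (w-1)^2 ≤ (w-1)^2 * (1 - Real.log c) := by
      nlinarith [sq_nonneg (w-1)]
    linarith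

/-- Pointwise Klein-type upper bound for `φ(x) = -log (t+x)`: for `t > 0` and `x, y ∈ (0,1)`,
`-(log (t+x) - log (t+y) - (x-y)/(t+y)) ≤ (x-y)² (1 - log (t/(t+y)))/(t+y)²`. -/
theorem klein_log_upper_bound (t x y : ℝ) (ht : 0 < t)
    (hx : x ∈ Ioo 0 1) (hy : y ∈ Ioo 0 1) :
    -(Real.log (t + x) - Real.log (t + y) - (x - y) / (t + y)) ≤
      (x - y) ^ 2 * (1 - Real.log (t / (t + y))) / (t + y) ^ 2 := by
  obtain ⟨hx0, hx1⟩ := hx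
  obtain ⟨hy0, hy1⟩ := hy
  have hb : 0 < t + y := by linarith
  have ha : 0 < t + x := by linarith
  set w := (t + x) / (t + y) with hwdef
  set c := t / (t + y) with hcdef
  have hw : 0 < w := by positivity
  have hc0 : 0 < c := by positivity
  have hc1 : c ≤ 1 := by
    rw [hcdef, div_le_one hb]; linarith
  have hcw : c ≤ w := by
    rw [hcdef, hwdef, div_le_div_iff₀ hb hb]
    nlinarith
  have hcore := klein_core w c hc0 hc1 hcw hw
  have hlogw : Real.log w = Real.log (t + x) - Real.log (t + y) :=
    Real.log_div (ne_of_gt ha) (ne_of_gt hb)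
  have hwm1 : w - 1 = (x - y) / (t + y) := by
    rw [hwdef]; field_simp; ring
  rw [hlogw, hwm1] at hcore
  have hsq : ((x - y) / (t + y))^2 = (x - y)^2 / (t + y)^2 := by
    rw [div_pow]
  rw [hsq] at hcore
  have : (x - y)^2 / (t + y)^2 * (1 - Real.log c) =
      (x - y) ^ 2 * (1 - Real.log (t / (t + y))) / (t + y) ^ 2 := by
    rw [hcdef]; ring
  linarith [hcore, this.symm.le, this.le]
end

section
/- For φ(x) = x², the relative entropy H(A,B) = tr(A² − B² − 2B(A−B)) = tr((A−B)²) = ‖A−B‖²_HS, and it satisfies monotonicity: for every contraction X (X*X ≤ 1) and Hermitian matrices 0 ≤ A, B ≤ 1, tr((XAX* − XBX*)²) ≤ tr((A−B)²). -/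
open ComplexOrder Matrix

lemma psd_trace_nonneg {k : ℕ} {M : Matrix (Fin k) (Fin k) ℂ} (hM : M.PosSemidef) :
    0 ≤ M.trace := by
  rw [Matrix.trace]
  apply Finset.sum_nonneg
  intro i _
  exact hM.diag_nonneg

open scoped MatrixOrder in
lemma trace_mul_psd_nonneg {k : ℕ} {M N : Matrix (Fin k) (Fin k) ℂ}
    (hM : M.PosSemidef) (hN : N.PosSemidef) : 0 ≤ (M * N).trace := by
  have hs : CFC.sqrt N * CFC.sqrt N = N := CFC.sqrt_mul_sqrt_self N hN.nonneg
  have hpsd : (CFC.sqrt N * M * CFC.sqrt N).PosSemidef := by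
    have := hM.conjTranspose_mul_mul_same (CFC.sqrt N)
    rwa [(CFC.sqrt_nonneg N).posSemidef.1.eq] at this
  have h1 : (M * N).trace = (CFC.sqrt N * M * CFC.sqrt N).trace := by
    calc (M * N).trace = (M * (CFC.sqrt N * CFC.sqrt N)).trace := by rw [hs]
      _ = (M * CFC.sqrt N * CFC.sqrt N).trace := by rw [Matrix.mul_assoc]
      _ = (CFC.sqrt N * (M * CFC.sqrt N)).trace := by rw [Matrix.trace_mul_comm]
      _ = (CFC.sqrt N * M * CFC.sqrt N).trace := by rw [Matrix.mul_assoc]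
  rw [h1]
  exact psd_trace_nonneg hpsd

/-- For `φ(x) = x²`, the relative entropy is `H(A,B) = tr ((A-B)²) = ‖A-B‖²_HS`, and it is
monotone: for every contraction `X` (i.e. `X*X ≤ 1`) and Hermitian `0 ≤ A, B ≤ 1`,
`tr ((XAX* - XBX*)²) ≤ tr ((A-B)²)`. -/
theorem relative_entropy_sq_monotone {n m : ℕ}
    (X : Matrix (Fin m) (Fin n) ℂ) (hX : (1 - Xᴴ * X).PosSemidef)
    (A B : Matrix (Fin n) (Fin n) ℂ)
    (hA : IsSelfAdjoint A) (hB : IsSelfAdjoint B)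
    (hApos : A.PosSemidef) (hAle : (1 - A).PosSemidef)
    (hBpos : B.PosSemidef) (hBle : (1 - B).PosSemidef) :
    ((X * A * Xᴴ - X * B * Xᴴ) * (X * A * Xᴴ - X * B * Xᴴ)).trace ≤
      ((A - B) * (A - B)).trace := by
  set C := A - B with hCdef
  have hA' : Aᴴ = A := hA
  have hB' : Bᴴ = B := hB
  have hC : Cᴴ = C := by
    rw [hCdef, Matrix.conjTranspose_sub, hA', hB']
  set P := Xᴴ * X with hPdef
  set Q := (1 : Matrix (Fin n) (Fin n) ℂ) - P with hQdef
  have hXC : X * A * Xᴴ - X * B * Xᴴ = X * C * Xᴴ := by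
    simp [hCdef, Matrix.mul_sub, Matrix.sub_mul]
  rw [hXC]
  have hPpsd : P.PosSemidef := Matrix.posSemidef_conjTranspose_mul_self X
  have hQpsd : Q.PosSemidef := hX
  have hCPC : (C * P * C).PosSemidef := by
    have := hPpsd.mul_mul_conjTranspose_same C
    rwa [hC] at this
  have hCQC : (C * Q * C).PosSemidef := by
    have := hQpsd.mul_mul_conjTranspose_same C
    rwa [hC] at this
  have key : (X * C * Xᴴ * (X * C * Xᴴ)).trace = (C * P * C * P).trace := by
    rw [show X * C * Xᴴ * (X * C * Xᴴ) = X * (C * (Xᴴ * X) * C * Xᴴ) by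
      simp [Matrix.mul_assoc]]
    rw [Matrix.trace_mul_comm]
    simp [Matrix.mul_assoc, hPdef]
  rw [key]
  have h1 : 0 ≤ (C * P * C).trace - (C * P * C * P).trace := by
    have h := trace_mul_psd_nonneg hCPC hQpsd
    rwa [hQdef, Matrix.mul_sub, Matrix.mul_one, Matrix.trace_sub] at h
  have h2 : 0 ≤ (C * C).trace - (C * P * C).trace := by
    have h := trace_mul_psd_nonneg hCQC (Matrix.PosSemidef.one)
    have e : C * Q * C * 1 = C * C - C * P * C := by
      rw [hQdef]; noncomm_ring
    rwa [e, Matrix.trace_sub] at h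
  calc (C * P * C * P).trace ≤ (C * P * C).trace := by
        rw [← sub_nonneg]; exact h1
    _ ≤ (C * C).trace := by rw [← sub_nonneg]; exact h2
end
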